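/- Let k > 0 and a, b ∈ ℝ with |a + b| < k. Then there exist constants K₁, K₂, K₃ > 0 depending only on a, b, k (and not on n) such that for every n ∈ ℕ, all continuous inputs u, w : [0,∞) → ℝ, every ξ = (ξ_1,…,ξ_n) ∈ ℝ^n, and every solution (x_1,…,x_n) of the linear string x_i'(t) = a·x_{i−1}(t) − k·x_i(t) + b·x_{i+1}(t) (with x_0 := u, x_{n+1} := w) and x_i(0) = ξ_i, one has ‖x_i‖_{[0,t],2} ≤ K₁·‖u‖_{[0,t],2} + K₂·‖w‖_{[0,t],2} + K₃·(Σ_{j=1}^{n} ξ_j²)^{1/2} for all t ≥ 0 and all i = 1,…,n. -/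

import Mathlib

/-- The `L²` norm of a real-valued signal on the interval `[0, t]`. -/
noncomputable def l2Norm (y : ℝ → ℝ) (t : ℝ) : ℝ :=
  Real.sqrt (∫ s in (0:ℝ)..t, (y s) ^ 2)

private lemma sqrt_add_le' {A B : ℝ} (hA : 0 ≤ A) (hB : 0 ≤ B) :
    Real.sqrt (A + B) ≤ Real.sqrt A + Real.sqrt B := by
  have h : A + B ≤ (Real.sqrt A + Real.sqrt B) ^ 2 := by
    nlinarith [Real.sq_sqrt hA, Real.sq_sqrt hB, Real.sqrt_nonneg A, Real.sqrt_nonneg B]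
  calc Real.sqrt (A + B) ≤ Real.sqrt ((Real.sqrt A + Real.sqrt B) ^ 2) := Real.sqrt_le_sqrt h
  _ = _ := Real.sqrt_sq (by positivity)

private lemma young' (c p q : ℝ) (hc : 0 < c) :
    2 * (p * q) ≤ c / 2 * p ^ 2 + 2 / c * q ^ 2 := by
  have h : c * (2 * (p * q)) ≤ c * (c / 2 * p ^ 2 + 2 / c * q ^ 2) := by
    have h2 : c * (c / 2 * p ^ 2 + 2 / c * q ^ 2) = c ^ 2 / 2 * p ^ 2 + 2 * q ^ 2 := by
      field_simp
    rw [h2]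
    nlinarith [sq_nonneg (c * p - 2 * q)]
  exact le_of_mul_le_mul_left h hc

private lemma ident' (a b : ℝ) (y : ℕ → ℝ) (n : ℕ) (hn : 1 ≤ n) :
    (∑ i ∈ Finset.Icc 1 n, y i * (a * y (i - 1) + b * y (i + 1)))
      = (a + b) * (∑ i ∈ Finset.Icc 1 (n - 1), y i * y (i + 1))
        + a * y 1 * y 0 + b * y n * y (n + 1) := by
  induction n, hn using Nat.le_induction with
  | base => simp; ring
  | succ n hn ih =>
    rw [Finset.sum_Icc_succ_top (by omega : 1 ≤ n + 1), ih]
    have h1 : n + 1 - 1 = n := by omega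
    rw [h1]
    have h2 : (∑ i ∈ Finset.Icc 1 n, y i * y (i + 1))
        = (∑ i ∈ Finset.Icc 1 (n - 1), y i * y (i + 1)) + y n * y (n + 1) := by
      conv_lhs => rw [show n = (n - 1) + 1 by omega]
      rw [Finset.sum_Icc_succ_top (by omega : 1 ≤ (n - 1) + 1), show (n - 1) + 1 = n by omega]
    rw [h2]
    ring

private lemma cross' (y : ℕ → ℝ) (m : ℕ) :
    2 * (∑ i ∈ Finset.Icc 1 m, |y i * y (i + 1)|) + y (m + 1) ^ 2
      ≤ 2 * ∑ i ∈ Finset.Icc 1 (m + 1), y i ^ 2 := by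
  induction m with
  | zero => simp; nlinarith [sq_nonneg (y 1)]
  | succ m ih =>
    rw [Finset.sum_Icc_succ_top (by omega : 1 ≤ m + 1),
        Finset.sum_Icc_succ_top (by omega : 1 ≤ m + 1 + 1)]
    have habs : |y (m + 1) * y (m + 2)| ≤ (y (m + 1) ^ 2 + y (m + 2) ^ 2) / 2 := by
      rw [abs_mul]
      nlinarith [sq_nonneg (|y (m + 1)| - |y (m + 2)|), sq_abs (y (m + 1)), sq_abs (y (m + 2))]
    have h3 : m + 1 + 1 = m + 2 := rfl
    rw [h3] at *
    linarith

private lemma key_alg (a b k : ℝ) (hc : 0 < k - |a + b|) (y : ℕ → ℝ) (n : ℕ) (hn : 1 ≤ n) :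
    (∑ i ∈ Finset.Icc 1 n, 2 * y i * (a * y (i - 1) - k * y i + b * y (i + 1)))
      ≤ -(k - |a + b|) * (∑ i ∈ Finset.Icc 1 n, y i ^ 2)
        + 2 * a ^ 2 / (k - |a + b|) * y 0 ^ 2
        + 2 * b ^ 2 / (k - |a + b|) * y (n + 1) ^ 2 := by
  set c := k - |a + b| with hcdef
  set V := ∑ i ∈ Finset.Icc 1 n, y i ^ 2 with hV
  have hstep : (∑ i ∈ Finset.Icc 1 n, 2 * y i * (a * y (i - 1) - k * y i + b * y (i + 1)))
      = 2 * (∑ i ∈ Finset.Icc 1 n, y i * (a * y (i - 1) + b * y (i + 1))) - 2 * k * V := by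
    rw [hV, Finset.mul_sum, Finset.mul_sum, ← Finset.sum_sub_distrib]
    exact Finset.sum_congr rfl fun i _ => by ring
  rw [hstep, ident' a b y n hn]
  set S := ∑ i ∈ Finset.Icc 1 (n - 1), y i * y (i + 1) with hS
  have hVnn : 0 ≤ V := Finset.sum_nonneg fun i _ => sq_nonneg _
  have hTV : (∑ i ∈ Finset.Icc 1 (n - 1), |y i * y (i + 1)|) ≤ V := by
    have h := cross' y (n - 1)
    rw [show n - 1 + 1 = n by omega] at h
    nlinarith [sq_nonneg (y n)]
  have hSle : (a + b) * S ≤ (k - c) * V := by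
    have h1 : (a + b) * S ≤ |a + b| * V := by
      calc (a + b) * S ≤ |(a + b) * S| := le_abs_self _
      _ = |a + b| * |S| := abs_mul _ _
      _ ≤ |a + b| * V := by
          apply mul_le_mul_of_nonneg_left _ (abs_nonneg _)
          calc |S| ≤ ∑ i ∈ Finset.Icc 1 (n - 1), |y i * y (i + 1)| :=
                Finset.abs_sum_le_sum_abs _ _
          _ ≤ V := hTV
    have h2 : |a + b| = k - c := by rw [hcdef]; ring
    rwa [h2] at h1
  have h1 : y 1 ^ 2 ≤ V :=
    Finset.single_le_sum (f := fun i => y i ^ 2) (fun i _ => sq_nonneg (y i))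
      (by simp [Finset.mem_Icc]; omega)
  have h2 : y n ^ 2 ≤ V :=
    Finset.single_le_sum (f := fun i => y i ^ 2) (fun i _ => sq_nonneg (y i))
      (by simp [Finset.mem_Icc]; omega)
  have hy1 : 2 * (y 1 * (a * y 0)) ≤ c / 2 * y 1 ^ 2 + 2 / c * (a * y 0) ^ 2 := young' c _ _ hc
  have hy2 : 2 * (y n * (b * y (n + 1))) ≤ c / 2 * y n ^ 2 + 2 / c * (b * y (n + 1)) ^ 2 :=
    young' c _ _ hc
  have h2c : 2 / c * (a * y 0) ^ 2 = 2 * a ^ 2 / c * y 0 ^ 2 := by field_simp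
  have h2c' : 2 / c * (b * y (n + 1)) ^ 2 = 2 * b ^ 2 / c * y (n + 1) ^ 2 := by field_simp
  rw [h2c] at hy1; rw [h2c'] at hy2
  nlinarith [hSle, hy1, hy2, h1, h2, hVnn]

/-- Example 1 (Lyapunov-based condition (4.7)): the linear string
`ẋᵢ = a x_{i−1} − k xᵢ + b x_{i+1}` is `L²` string stable when `|a + b| < k`. -/
theorem linear_string_lyapunov_bidirectional (k a b : ℝ) (hk : 0 < k)
    (hcond : |a + b| < k) :
    ∃ K₁ K₂ K₃ : ℝ, 0 < K₁ ∧ 0 < K₂ ∧ 0 < K₃ ∧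
      ∀ n : ℕ, ∀ u w : ℝ → ℝ,
        ContinuousOn u (Set.Ici 0) → ContinuousOn w (Set.Ici 0) →
        ∀ ξ : ℕ → ℝ, ∀ x : ℕ → ℝ → ℝ,
          (∀ t, x 0 t = u t) → (∀ t, x (n + 1) t = w t) →
          (∀ i, 1 ≤ i → i ≤ n → x i 0 = ξ i ∧
            ∀ t ≥ (0:ℝ), HasDerivAt (x i)
              (a * x (i - 1) t - k * x i t + b * x (i + 1) t) t) →
          ∀ i, 1 ≤ i → i ≤ n → ∀ t ≥ (0:ℝ),
            l2Norm (x i) t ≤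
              K₁ * l2Norm u t + K₂ * l2Norm w t +
              K₃ * Real.sqrt (∑ j ∈ Finset.Icc 1 n, (ξ j) ^ 2) := by
  have hc : 0 < k - |a + b| := sub_pos.mpr hcond
  set c := k - |a + b| with hcdef
  refine ⟨Real.sqrt (2 * a ^ 2 / c / c) + 1, Real.sqrt (2 * b ^ 2 / c / c) + 1,
    Real.sqrt (1 / c) + 1, by positivity, by positivity, by positivity, ?_⟩
  intro n u w hu hw ξ x hx0 hxn1 hsol i hi1 hin t ht
  simp only [l2Norm]
  have hn1 : 1 ≤ n := le_trans hi1 hin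
  have hxu : x 0 = u := funext hx0
  have hxw : x (n + 1) = w := funext hxn1
  have hcx : ∀ j, j ≤ n + 1 → ContinuousOn (x j) (Set.Icc 0 t) := by
    intro j hj
    rcases Nat.eq_zero_or_pos j with h0 | hpos
    · subst h0; rw [hxu]; exact hu.mono Set.Icc_subset_Ici_self
    · rcases eq_or_lt_of_le hj with he | hlt
      · rw [he, hxw]; exact hw.mono Set.Icc_subset_Ici_self
      · have hjn : j ≤ n := by omega
        intro s hs
        exact ((hsol j hpos hjn).2 s hs.1).continuousAt.continuousWithinAt
  set V : ℝ → ℝ := fun s => ∑ j ∈ Finset.Icc 1 n, x j s ^ 2 with hVdef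
  set V' : ℝ → ℝ := fun s => ∑ j ∈ Finset.Icc 1 n,
      2 * x j s * (a * x (j - 1) s - k * x j s + b * x (j + 1) s) with hV'def
  have hderV : ∀ s ∈ Set.Icc (0:ℝ) t, HasDerivAt V (V' s) s := by
    intro s hs
    simp only [hVdef, hV'def]
    apply HasDerivAt.fun_sum
    intro j hj
    simp only [Finset.mem_Icc] at hj
    have hd := (hsol j hj.1 hj.2).2 s hs.1
    have h2 := hd.fun_pow 2
    simpa [pow_one] using h2
  have huc : ContinuousOn u (Set.Icc 0 t) := hu.mono Set.Icc_subset_Ici_self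
  have hwc : ContinuousOn w (Set.Icc 0 t) := hw.mono Set.Icc_subset_Ici_self
  have hcV' : ContinuousOn V' (Set.Icc 0 t) := by
    simp only [hV'def]
    apply continuousOn_finset_sum
    intro j hj
    simp only [Finset.mem_Icc] at hj
    have c1 := hcx j (by omega)
    have c0 := hcx (j - 1) (by omega)
    have c2 := hcx (j + 1) (by omega)
    exact (continuousOn_const.mul c1).mul
      (((continuousOn_const.mul c0).sub (continuousOn_const.mul c1)).add
        (continuousOn_const.mul c2))
  have hcVc : ContinuousOn V (Set.Icc 0 t) := by
    simp only [hVdef]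
    exact continuousOn_finset_sum _ fun j hj =>
      (hcx j (by simp [Finset.mem_Icc] at hj; omega)).pow 2
  have huIcc : Set.uIcc (0:ℝ) t = Set.Icc 0 t := Set.uIcc_of_le ht
  have intOf : ∀ f : ℝ → ℝ, ContinuousOn f (Set.Icc 0 t) →
      IntervalIntegrable f MeasureTheory.volume 0 t := fun f h =>
    ContinuousOn.intervalIntegrable (by rwa [huIcc])
  have hftc : (∫ s in (0:ℝ)..t, V' s) = V t - V 0 :=
    intervalIntegral.integral_eq_sub_of_hasDerivAt
      (fun s hs => hderV s (huIcc ▸ hs)) (intOf _ hcV')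
  have hpt : ∀ s ∈ Set.Icc (0:ℝ) t,
      V' s ≤ -c * V s + 2 * a ^ 2 / c * u s ^ 2 + 2 * b ^ 2 / c * w s ^ 2 := by
    intro s hs
    have h := key_alg a b k hc (fun j => x j s) n hn1
    simp only [hV'def, hVdef]
    simpa [hx0 s, hxn1 s, ← hcdef] using h
  have hmono : (∫ s in (0:ℝ)..t, V' s)
      ≤ ∫ s in (0:ℝ)..t, (-c * V s + 2 * a ^ 2 / c * u s ^ 2 + 2 * b ^ 2 / c * w s ^ 2) :=
    intervalIntegral.integral_mono_on ht (intOf _ hcV')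
      ((((intOf _ hcVc).const_mul _).add ((intOf _ (huc.pow 2)).const_mul _)).add
        ((intOf _ (hwc.pow 2)).const_mul _)) hpt
  have hsplit : (∫ s in (0:ℝ)..t, (-c * V s + 2 * a ^ 2 / c * u s ^ 2 + 2 * b ^ 2 / c * w s ^ 2))
      = -c * (∫ s in (0:ℝ)..t, V s) + 2 * a ^ 2 / c * (∫ s in (0:ℝ)..t, u s ^ 2)
        + 2 * b ^ 2 / c * (∫ s in (0:ℝ)..t, w s ^ 2) := by
    rw [intervalIntegral.integral_add
          (((intOf _ hcVc).const_mul _).add ((intOf (fun s => u s ^ 2) (huc.pow 2)).const_mul _))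
          ((intOf (fun s => w s ^ 2) (hwc.pow 2)).const_mul _),
        intervalIntegral.integral_add ((intOf _ hcVc).const_mul _)
          ((intOf (fun s => u s ^ 2) (huc.pow 2)).const_mul _),
        intervalIntegral.integral_const_mul, intervalIntegral.integral_const_mul,
        intervalIntegral.integral_const_mul]
  have hV0 : V 0 = ∑ j ∈ Finset.Icc 1 n, ξ j ^ 2 := by
    simp only [hVdef]
    exact Finset.sum_congr rfl fun j hj => by
      simp only [Finset.mem_Icc] at hj
      rw [(hsol j hj.1 hj.2).1]
  have hVt : 0 ≤ V t := Finset.sum_nonneg fun _ _ => sq_nonneg _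
  have hIV : c * (∫ s in (0:ℝ)..t, V s)
      ≤ (∑ j ∈ Finset.Icc 1 n, ξ j ^ 2) + 2 * a ^ 2 / c * (∫ s in (0:ℝ)..t, u s ^ 2)
        + 2 * b ^ 2 / c * (∫ s in (0:ℝ)..t, w s ^ 2) := by
    rw [hsplit] at hmono
    rw [hftc] at hmono
    rw [hV0] at hmono
    linarith
  have hxiV : (∫ s in (0:ℝ)..t, x i s ^ 2) ≤ ∫ s in (0:ℝ)..t, V s := by
    apply intervalIntegral.integral_mono_on ht (intOf _ ((hcx i (by omega)).pow 2)) (intOf _ hcVc)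
    intro s hs
    simp only [hVdef]
    exact Finset.single_le_sum (f := fun j => x j s ^ 2) (fun j _ => sq_nonneg _)
      (by simp [Finset.mem_Icc]; omega)
  have hIUnn : 0 ≤ ∫ s in (0:ℝ)..t, u s ^ 2 :=
    intervalIntegral.integral_nonneg ht fun s _ => sq_nonneg _
  have hIWnn : 0 ≤ ∫ s in (0:ℝ)..t, w s ^ 2 :=
    intervalIntegral.integral_nonneg ht fun s _ => sq_nonneg _
  have hXinn : 0 ≤ ∑ j ∈ Finset.Icc 1 n, ξ j ^ 2 := Finset.sum_nonneg fun _ _ => sq_nonneg _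
  have hIVle : (∫ s in (0:ℝ)..t, V s)
      ≤ ((∑ j ∈ Finset.Icc 1 n, ξ j ^ 2) + 2 * a ^ 2 / c * (∫ s in (0:ℝ)..t, u s ^ 2)
        + 2 * b ^ 2 / c * (∫ s in (0:ℝ)..t, w s ^ 2)) / c := by
    rw [le_div_iff₀ hc]; linarith
  have heq : ((∑ j ∈ Finset.Icc 1 n, ξ j ^ 2) + 2 * a ^ 2 / c * (∫ s in (0:ℝ)..t, u s ^ 2)
        + 2 * b ^ 2 / c * (∫ s in (0:ℝ)..t, w s ^ 2)) / c
      = 2 * a ^ 2 / c / c * (∫ s in (0:ℝ)..t, u s ^ 2)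
        + (2 * b ^ 2 / c / c * (∫ s in (0:ℝ)..t, w s ^ 2)
          + 1 / c * (∑ j ∈ Finset.Icc 1 n, ξ j ^ 2)) := by
    field_simp; ring
  have hfin : (∫ s in (0:ℝ)..t, x i s ^ 2)
      ≤ 2 * a ^ 2 / c / c * (∫ s in (0:ℝ)..t, u s ^ 2)
        + (2 * b ^ 2 / c / c * (∫ s in (0:ℝ)..t, w s ^ 2)
          + 1 / c * (∑ j ∈ Finset.Icc 1 n, ξ j ^ 2)) := by
    rw [heq] at hIVle; linarith
  have hA : (0:ℝ) ≤ 2 * a ^ 2 / c / c * (∫ s in (0:ℝ)..t, u s ^ 2) :=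
    mul_nonneg (by positivity) hIUnn
  have hB : (0:ℝ) ≤ 2 * b ^ 2 / c / c * (∫ s in (0:ℝ)..t, w s ^ 2) :=
    mul_nonneg (by positivity) hIWnn
  have hC : (0:ℝ) ≤ 1 / c * (∑ j ∈ Finset.Icc 1 n, ξ j ^ 2) :=
    mul_nonneg (by positivity) hXinn
  calc Real.sqrt (∫ s in (0:ℝ)..t, x i s ^ 2)
      ≤ Real.sqrt (2 * a ^ 2 / c / c * (∫ s in (0:ℝ)..t, u s ^ 2)
        + (2 * b ^ 2 / c / c * (∫ s in (0:ℝ)..t, w s ^ 2)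
          + 1 / c * (∑ j ∈ Finset.Icc 1 n, ξ j ^ 2))) := Real.sqrt_le_sqrt hfin
  _ ≤ Real.sqrt (2 * a ^ 2 / c / c * (∫ s in (0:ℝ)..t, u s ^ 2))
        + Real.sqrt (2 * b ^ 2 / c / c * (∫ s in (0:ℝ)..t, w s ^ 2)
          + 1 / c * (∑ j ∈ Finset.Icc 1 n, ξ j ^ 2)) := sqrt_add_le' hA (add_nonneg hB hC)
  _ ≤ Real.sqrt (2 * a ^ 2 / c / c * (∫ s in (0:ℝ)..t, u s ^ 2))
        + (Real.sqrt (2 * b ^ 2 / c / c * (∫ s in (0:ℝ)..t, w s ^ 2))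
          + Real.sqrt (1 / c * (∑ j ∈ Finset.Icc 1 n, ξ j ^ 2))) := by
      have := sqrt_add_le' hB hC; linarith
  _ = Real.sqrt (2 * a ^ 2 / c / c) * Real.sqrt (∫ s in (0:ℝ)..t, u s ^ 2)
        + (Real.sqrt (2 * b ^ 2 / c / c) * Real.sqrt (∫ s in (0:ℝ)..t, w s ^ 2)
          + Real.sqrt (1 / c) * Real.sqrt (∑ j ∈ Finset.Icc 1 n, ξ j ^ 2)) := by
      rw [Real.sqrt_mul (by positivity), Real.sqrt_mul (by positivity),
          Real.sqrt_mul (by positivity)]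
  _ ≤ (Real.sqrt (2 * a ^ 2 / c / c) + 1) * Real.sqrt (∫ s in (0:ℝ)..t, u s ^ 2)
        + (Real.sqrt (2 * b ^ 2 / c / c) + 1) * Real.sqrt (∫ s in (0:ℝ)..t, w s ^ 2)
        + (Real.sqrt (1 / c) + 1) * Real.sqrt (∑ j ∈ Finset.Icc 1 n, ξ j ^ 2) := by
      nlinarith [Real.sqrt_nonneg (∫ s in (0:ℝ)..t, u s ^ 2),
        Real.sqrt_nonneg (∫ s in (0:ℝ)..t, w s ^ 2),
        Real.sqrt_nonneg (∑ j ∈ Finset.Icc 1 n, ξ j ^ 2)]
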